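/- arXiv:1801.00053 — 8 statements merged into one kernel-verified Lean document; each statement's English description precedes it below -/
import Mathlib

section
/- Let U be a finite set of monomials in M(x_1,...,x_n). Any monomial w admits at most one Janet divisor in U; that is, there is at most one u ∈ U such that w = u·v with every variable occurring in v being Janet-multiplicative for u with respect to U. -/
/-- The variable `x_i` is Janet-multiplicative for the monomial `u` with respect to the
finite set of monomials `U` (variables ordered `x_n > … > x_1`, i.e. by their index):
`u` has maximal `i`-degree among the monomials of `U` agreeing with `u` in all
degrees of index `> i`. -/
def JanetMult {n : ℕ} (U : Finset (Fin n → ℕ)) (u : Fin n → ℕ) (i : Fin n) : Prop :=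
  ∀ v ∈ U, (∀ j, i < j → v j = u j) → v i ≤ u i

/-- `u` is a Janet divisor of `w` with respect to `U`: `u ∈ U`, `u` divides `w`, and every
variable occurring in the quotient `w/u` is Janet-multiplicative for `u` w.r.t. `U`. -/
def JanetDiv {n : ℕ} (U : Finset (Fin n → ℕ)) (u w : Fin n → ℕ) : Prop :=
  u ∈ U ∧ u ≤ w ∧ ∀ i, u i < w i → JanetMult U u i

/-- Any monomial `w` admits at most one Janet divisor in a finite set of monomials `U`. -/
theorem janet_divisor_unique {n : ℕ} (U : Finset (Fin n → ℕ)) (w u u' : Fin n → ℕ)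
    (h : JanetDiv U u w) (h' : JanetDiv U u' w) : u = u' := by
  by_contra hne
  have hS : (Finset.univ.filter (fun i => u i ≠ u' i)).Nonempty := by
    by_contra hS
    apply hne
    funext i
    by_contra hi
    exact hS ⟨i, Finset.mem_filter.mpr ⟨Finset.mem_univ _, hi⟩⟩
  set S := Finset.univ.filter (fun i => u i ≠ u' i) with hSdef
  set i := S.max' hS with hidef
  have hi : u i ≠ u' i := (Finset.mem_filter.mp (S.max'_mem hS)).2
  have hagree : ∀ j, i < j → u j = u' j := by
    intro j hj
    by_contra hj'
    exact absurd (S.le_max' j (Finset.mem_filter.mpr ⟨Finset.mem_univ _, hj'⟩))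
      (not_le.mpr hj)
  rcases lt_or_gt_of_ne hi with hlt | hgt
  · have := h.2.2 i (lt_of_lt_of_le hlt (h'.2.1 i)) u' h'.1
      (fun j hj => (hagree j hj).symm)
    exact absurd this (not_le.mpr hlt)
  · have := h'.2.2 i (lt_of_lt_of_le hgt (h.2.1 i)) u h.1 (fun j hj => hagree j hj)
    exact absurd this (not_le.mpr hgt)
end

section
/- The Janet division is an involutive division: for any finite set U of monomials, the relation 'u is a Janet divisor of w with respect to U' satisfies the six axioms of an involutive division. -/
/-- The six Gerdt–Blinkov axioms for an involutive division, given as a relation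
`d U u w` (read: `u` is an involutive divisor of `w` with respect to `U`) defined for
every finite set of monomials `U` and `u ∈ U`. -/
def IsInvolutiveDivision (n : ℕ)
    (d : Finset (Fin n → ℕ) → (Fin n → ℕ) → (Fin n → ℕ) → Prop) : Prop :=
  (∀ U u w, d U u w → u ∈ U ∧ u ≤ w) ∧
  (∀ (U : Finset (Fin n → ℕ)) u, u ∈ U → d U u u) ∧
  (∀ (U : Finset (Fin n → ℕ)) u, u ∈ U →
      ∀ v w : Fin n → ℕ, (d U u (u + v) ∧ d U u (u + w)) ↔ d U u (u + v + w)) ∧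
  (∀ (U : Finset (Fin n → ℕ)) u u' w, d U u w → d U u' w → d U u u' ∨ d U u' u) ∧
  (∀ (U : Finset (Fin n → ℕ)) u u' w, d U u u' → d U u' w → d U u w) ∧
  (∀ (U U' : Finset (Fin n → ℕ)) u w, U' ⊆ U → u ∈ U' → d U u w → d U' u w)

/-- Reflexivity of Janet division. -/
lemma janetDiv_refl {n : ℕ} {U : Finset (Fin n → ℕ)} {u : Fin n → ℕ} (hu : u ∈ U) :
    JanetDiv U u u :=
  ⟨hu, le_refl u, fun _ hi => absurd hi (lt_irrefl _)⟩

/-- Uniqueness of the Janet divisor. -/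
lemma janetDiv_unique {n : ℕ} {U : Finset (Fin n → ℕ)} {u u' w : Fin n → ℕ}
    (h : JanetDiv U u w) (h' : JanetDiv U u' w) : u = u' := by
  by_contra hne
  have hSne : (Finset.univ.filter (fun j => u j ≠ u' j)).Nonempty := by
    obtain ⟨j, hj⟩ := Function.ne_iff.mp hne
    exact ⟨j, by simpa using hj⟩
  set k := (Finset.univ.filter (fun j => u j ≠ u' j)).max' hSne with hk
  have hkmem := (Finset.univ.filter (fun j => u j ≠ u' j)).max'_mem hSne
  have hkne : u k ≠ u' k := by simpa using hkmem
  have hagree : ∀ j, k < j → u j = u' j := by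
    intro j hj
    by_contra hje
    exact absurd (Finset.le_max' _ j (by simpa using hje)) (not_le_of_gt hj)
  rcases lt_or_gt_of_ne hkne with hlt | hgt
  · have hm : JanetMult U u k := h.2.2 k (lt_of_lt_of_le hlt (h'.2.1 k))
    have := hm u' h'.1 (fun j hj => (hagree j hj).symm)
    omega
  · have hm : JanetMult U u' k := h'.2.2 k (lt_of_lt_of_le hgt (h.2.1 k))
    have := hm u h.1 (fun j hj => hagree j hj)
    omega

/-- Transitivity of Janet division. -/
lemma janetDiv_trans {n : ℕ} {U : Finset (Fin n → ℕ)} {u u' w : Fin n → ℕ}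
    (h1 : JanetDiv U u u') (h2 : JanetDiv U u' w) : JanetDiv U u w := by
  refine ⟨h1.1, le_trans h1.2.1 h2.2.1, fun i hi => ?_⟩
  rcases lt_or_eq_of_le (h1.2.1 i) with hlt | heq
  · exact h1.2.2 i hlt
  · -- u i = u' i; first show u and u' agree above i
    have hagree : ∀ j, i < j → u j = u' j := by
      by_contra hca
      push_neg at hca
      have hSne : (Finset.univ.filter (fun j => i < j ∧ u j ≠ u' j)).Nonempty := by
        obtain ⟨j, hj1, hj2⟩ := hca
        exact ⟨j, by simp [hj1, hj2]⟩
      set k := (Finset.univ.filter (fun j => i < j ∧ u j ≠ u' j)).max' hSne with hk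
      have hkmem := (Finset.univ.filter (fun j => i < j ∧ u j ≠ u' j)).max'_mem hSne
      have hkprop : i < k ∧ u k ≠ u' k := by simpa using hkmem
      have hklt : u k < u' k := lt_of_le_of_ne (h1.2.1 k) hkprop.2
      have hm : JanetMult U u k := h1.2.2 k hklt
      have habove : ∀ j, k < j → u' j = u j := by
        intro j hj
        by_contra hje
        have hji : i < j := lt_trans hkprop.1 hj
        exact absurd (Finset.le_max' _ j (by simp [hji, Ne.symm hje])) (not_le_of_gt hj)
      have := hm u' h2.1 habove
      omega
    intro v hv hva
    have hva' : ∀ j, i < j → v j = u' j := fun j hj => (hva j hj).trans (hagree j hj)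
    have hi' : u' i < w i := heq ▸ hi
    have := h2.2.2 i hi' v hv hva'
    rw [heq]
    exact this

/-- The Janet division is an involutive division: the Janet divisibility relation
satisfies the six axioms of an involutive division. -/
theorem janet_division_is_involutive (n : ℕ) :
    IsInvolutiveDivision n (fun U u w => JanetDiv U u w) := by
  refine ⟨fun U u w h => ⟨h.1, h.2.1⟩, fun U u hu => janetDiv_refl hu, ?_, ?_, ?_, ?_⟩
  · intro U u hu v w
    constructor
    · rintro ⟨h1, h2⟩
      refine ⟨hu, fun i => by simp only [Pi.add_apply]; omega, fun i hi => ?_⟩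
      simp only [Pi.add_apply] at hi
      by_cases hv : 0 < v i
      · exact h1.2.2 i (by simp only [Pi.add_apply]; omega)
      · exact h2.2.2 i (by simp only [Pi.add_apply]; omega)
    · intro h
      constructor
      · refine ⟨hu, fun i => by simp only [Pi.add_apply]; omega, fun i hi => ?_⟩
        simp only [Pi.add_apply] at hi
        exact h.2.2 i (by simp only [Pi.add_apply]; omega)
      · refine ⟨hu, fun i => by simp only [Pi.add_apply]; omega, fun i hi => ?_⟩
        simp only [Pi.add_apply] at hi
        exact h.2.2 i (by simp only [Pi.add_apply]; omega)
  · intro U u u' w h h'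
    exact Or.inl ((janetDiv_unique h h') ▸ janetDiv_refl h.1)
  · intro U u u' w h1 h2
    exact janetDiv_trans h1 h2
  · intro U U' u w hUU hu h
    exact ⟨hu, h.2.1, fun i hi v hv hva => h.2.2 i hi v (hUU hv) hva⟩
end

section
/- For any finite set U of monomials in M(x_1,...,x_n), the set of all monomials decomposes as the disjoint union of the Janet involutive cone of U and the Janet involutive cone of the set of complementary monomials of U: M(x_1,...,x_n) = cone_J(U) ⊔ ᶜcone_J(U). -/
/-- The monomials of `U` agreeing with `w` in all degrees of index `> i`
(Janet's class `[α_{i+1},…,α_n]`). -/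
def JanetClass {n : ℕ} (U : Finset (Fin n → ℕ)) (i : Fin n) (w : Fin n → ℕ) :
    Finset (Fin n → ℕ) :=
  U.filter (fun v => ∀ j, i < j → v j = w j)

/-- The `i`-th set of complementary monomials of `U`: monomials
`x_i^β x_{i+1}^{α_{i+1}} ⋯ x_n^{α_n}` such that the class `[α_{i+1},…,α_n]` is nonempty,
`β < deg_i([α_{i+1},…,α_n])` and `[β,α_{i+1},…,α_n] = ∅`. -/
def JanetComp {n : ℕ} (U : Finset (Fin n → ℕ)) (i : Fin n) : Set (Fin n → ℕ) :=
  {w | (∀ j, j < i → w j = 0) ∧ (JanetClass U i w).Nonempty ∧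
       w i < (JanetClass U i w).sup (fun v => v i) ∧
       ∀ v ∈ JanetClass U i w, v i ≠ w i}

/-- Multiplicative variables of a complementary monomial `w ∈ ᶜ(U)_i`:
all variables of index `< i`, together with the Janet-multiplicative variables of
index `> i` of the class `[α_{i+1},…,α_n]` of `w`. -/
def JanetCompMult {n : ℕ} (U : Finset (Fin n → ℕ)) (i : Fin n) (w : Fin n → ℕ)
    (j : Fin n) : Prop :=
  j < i ∨ (i < j ∧ ∃ u ∈ JanetClass U i w, JanetMult U u j)

/-- The Janet involutive cone of `U`: monomials admitting a Janet divisor in `U`. -/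
def JanetCone {n : ℕ} (U : Finset (Fin n → ℕ)) : Set (Fin n → ℕ) :=
  {w | ∃ u, JanetDiv U u w}

/-- The involutive cone of the set of complementary monomials of `U`: monomials of the
form `w·v` with `w` a complementary monomial and `v` a product of multiplicative
variables of `w`. -/
def JanetCompCone {n : ℕ} (U : Finset (Fin n → ℕ)) : Set (Fin n → ℕ) :=
  {w' | ∃ i, ∃ w ∈ JanetComp U i, w ≤ w' ∧ ∀ j, w j < w' j → JanetCompMult U i w j}

private lemma janetMult_of_eq {n : ℕ} {U : Finset (Fin n → ℕ)} {u u' : Fin n → ℕ}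
    {j : Fin n} (h : ∀ j', j ≤ j' → u j' = u' j') (hm : JanetMult U u j) :
    JanetMult U u' j := by
  intro v hv hagree
  rw [← h j le_rfl]
  exact hm v hv (fun j' hj' => (hagree j' hj').trans (h j' hj'.le).symm)

private lemma janetClass_congr {n : ℕ} (U : Finset (Fin n → ℕ)) (i : Fin n)
    {w w' : Fin n → ℕ} (h : ∀ j, i < j → w j = w' j) :
    JanetClass U i w = JanetClass U i w' := by
  unfold JanetClass
  apply Finset.filter_congr
  intro v _
  exact ⟨fun hv j hj => (hv j hj).trans (h j hj),
         fun hv j hj => (hv j hj).trans (h j hj).symm⟩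

private lemma fin_succ_le {n : ℕ} {i j : Fin n} {k : ℕ} (hik : (i : ℕ) = k)
    (h : i < j) : k + 1 ≤ (j : ℕ) := by
  have := Fin.lt_def.mp h; omega

private lemma fin_lt_of_le_ne {n : ℕ} {i j : Fin n} {k : ℕ} (hik : (i : ℕ) = k)
    (hj : k ≤ (j : ℕ)) (hne : j ≠ i) : i < j := by
  have : (j : ℕ) ≠ (i : ℕ) := fun h => hne (Fin.ext h)
  rw [Fin.lt_def]; omega

private lemma fin_sub_le {n m : ℕ} {j j' : Fin n} (h : j < j')
    (hj : n - (j : ℕ) ≤ m + 1) : n - (j' : ℕ) ≤ m := by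
  have := Fin.lt_def.mp h; have := j'.isLt; omega

private lemma janet_greedy {n : ℕ} (U : Finset (Fin n → ℕ)) (hU : U.Nonempty)
    (w : Fin n → ℕ) :
    ∀ m k : ℕ, k + m = n →
      (∃ u : Fin n → ℕ,
        (∃ v ∈ U, ∀ j : Fin n, k ≤ (j : ℕ) → v j = u j) ∧
        ∀ j : Fin n, k ≤ (j : ℕ) → u j ≤ w j ∧ (u j < w j → JanetMult U u j)) ∨
      w ∈ JanetCompCone U := by
  intro m
  induction m with
  | zero =>
    intro k hk
    obtain ⟨v, hv⟩ := hU
    exact Or.inl ⟨v, ⟨v, hv, fun j _ => rfl⟩,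
      fun j hj => absurd j.isLt (by omega)⟩
  | succ m ih =>
    intro k hk
    rcases ih (k + 1) (by omega) with ⟨u, ⟨v₁, hv₁U, hv₁⟩, hu⟩ | h
    · obtain ⟨i, hik⟩ : ∃ i : Fin n, (i : ℕ) = k := ⟨⟨k, by omega⟩, rfl⟩
      have hv₁cls : v₁ ∈ JanetClass U i u :=
        Finset.mem_filter.mpr ⟨hv₁U, fun j hj => hv₁ j (fin_succ_le hik hj)⟩
      by_cases hA : ∃ v ∈ JanetClass U i u, v i = w i
      · obtain ⟨v₂, hv₂, hv₂i⟩ := hA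
        have hv₂cls := Finset.mem_filter.mp hv₂
        left
        refine ⟨Function.update u i (w i), ⟨v₂, hv₂cls.1, ?_⟩, ?_⟩
        · intro j hj
          rcases eq_or_ne j i with rfl | hne
          · rw [Function.update_self]; exact hv₂i
          · rw [Function.update_of_ne hne]
            exact hv₂cls.2 j (fin_lt_of_le_ne hik hj hne)
        · intro j hj
          rcases eq_or_ne j i with rfl | hne
          · rw [Function.update_self]
            exact ⟨le_rfl, fun h => absurd h (lt_irrefl _)⟩
          · have hij : i < j := fin_lt_of_le_ne hik hj hne
            have hj1 : k + 1 ≤ (j : ℕ) := fin_succ_le hik hij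
            rw [Function.update_of_ne hne]
            refine ⟨(hu j hj1).1, fun h => ?_⟩
            exact janetMult_of_eq
              (fun j' hj' => (Function.update_of_ne (lt_of_lt_of_le hij hj').ne' _ _).symm)
              ((hu j hj1).2 h)
      · by_cases hB : w i < (JanetClass U i u).sup (fun v => v i)
        · -- failure: w lies in the complementary cone
          right
          obtain ⟨w₀, hw₀lt, hw₀i, hgt⟩ :
              ∃ w₀ : Fin n → ℕ, (∀ j, j < i → w₀ j = 0) ∧ w₀ i = w i ∧
                ∀ j, i < j → w₀ j = u j :=
            ⟨fun j => if j < i then 0 else if j = i then w i else u j,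
             fun j hj => by simp [hj],
             by simp,
             fun j hj => by simp [asymm hj, hj.ne']⟩
          have hclseq : JanetClass U i w₀ = JanetClass U i u := janetClass_congr U i hgt
          refine ⟨i, w₀, ⟨hw₀lt, ?_, ?_, ?_⟩, ?_, ?_⟩
          · rw [hclseq]; exact ⟨v₁, hv₁cls⟩
          · rw [hclseq, hw₀i]; exact hB
          · rw [hclseq, hw₀i]; exact fun v hv h => hA ⟨v, hv, h⟩
          · refine Pi.le_def.mpr fun j => ?_
            rcases lt_trichotomy j i with hj | rfl | hj
            · rw [hw₀lt j hj]; exact Nat.zero_le _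
            · rw [hw₀i]
            · rw [hgt j hj]
              exact (hu j (fin_succ_le hik hj)).1
          · intro j hj
            rcases lt_trichotomy j i with hji | rfl | hji
            · exact Or.inl hji
            · rw [hw₀i] at hj; exact absurd hj (lt_irrefl _)
            · have hj1 : k + 1 ≤ (j : ℕ) := fin_succ_le hik hji
              rw [hgt j hji] at hj
              refine Or.inr ⟨hji, v₁, by rw [hclseq]; exact hv₁cls, ?_⟩
              exact janetMult_of_eq
                (fun j' hj' =>
                  (hv₁ j' (fin_succ_le hik (lt_of_lt_of_le hji hj'))).symm)
                ((hu j hj1).2 hj)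
        · -- the sup is attainable: extend u by the sup at index i
          push_neg at hB
          obtain ⟨v₃, hv₃, hv₃i⟩ :=
            Finset.exists_mem_eq_sup (JanetClass U i u) ⟨v₁, hv₁cls⟩ (fun v => v i)
          have hv₃cls := Finset.mem_filter.mp hv₃
          left
          refine ⟨Function.update u i ((JanetClass U i u).sup (fun v => v i)),
            ⟨v₃, hv₃cls.1, ?_⟩, ?_⟩
          · intro j hj
            rcases eq_or_ne j i with rfl | hne
            · rw [Function.update_self]; exact hv₃i.symm
            · rw [Function.update_of_ne hne]
              exact hv₃cls.2 j (fin_lt_of_le_ne hik hj hne)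
          · intro j hj
            rcases eq_or_ne j i with rfl | hne
            · rw [Function.update_self]
              refine ⟨hB, fun _ => ?_⟩
              intro v hvU hag
              rw [Function.update_self]
              have hvcls : v ∈ JanetClass U j u :=
                Finset.mem_filter.mpr ⟨hvU, fun j' hj' =>
                  (hag j' hj').trans (Function.update_of_ne hj'.ne' _ _)⟩
              exact Finset.le_sup (f := fun v => v j) hvcls
            · have hij : i < j := fin_lt_of_le_ne hik hj hne
              have hj1 : k + 1 ≤ (j : ℕ) := fin_succ_le hik hij
              rw [Function.update_of_ne hne]
              refine ⟨(hu j hj1).1, fun h => ?_⟩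
              exact janetMult_of_eq
                (fun j' hj' => (Function.update_of_ne (lt_of_lt_of_le hij hj').ne' _ _).symm)
                ((hu j hj1).2 h)
    · exact Or.inr h


/-- For a nonempty finite set of monomials `U`, the set of all monomials is the disjoint
union of the Janet involutive cone of `U` and of the involutive cone of the set of
complementary monomials of `U`. -/
theorem janet_cone_comp_cone_partition {n : ℕ} (U : Finset (Fin n → ℕ))
    (hU : U.Nonempty) :
    ∀ w : Fin n → ℕ, w ∈ JanetCone U ↔ w ∉ JanetCompCone U := by
  intro w
  constructor
  · rintro ⟨u, huU, hule, humult⟩ ⟨i, w₀, ⟨hz, hcls, hsup, hne⟩, hle, hm⟩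
    have hle' : ∀ j, w₀ j ≤ w j := fun j => Pi.le_def.mp hle j
    have hule' : ∀ j, u j ≤ w j := fun j => Pi.le_def.mp hule j
    have key : ∀ m : ℕ, ∀ j : Fin n, n - (j : ℕ) ≤ m → i < j → u j = w₀ j := by
      intro m
      induction m with
      | zero =>
        intro j hj _
        exact absurd j.isLt (Nat.not_lt.mpr (Nat.le_of_sub_eq_zero (Nat.le_zero.mp hj)))
      | succ m ihm =>
        intro j hj hij
        have IH : ∀ j' : Fin n, j < j' → u j' = w₀ j' := fun j' hj' =>
          ihm j' (fin_sub_le hj' hj) (hij.trans hj')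
        rcases lt_or_eq_of_le (hle' j) with hlt | heq
        · rcases hm j hlt with hji | ⟨_, u', hu', hmu'⟩
          · exact absurd hji (asymm hij)
          · have hu'cls := Finset.mem_filter.mp hu'
            have h1 : u j ≤ u' j := hmu' u huU
              (fun j' hj' => (IH j' hj').trans (hu'cls.2 j' (hij.trans hj')).symm)
            have h2 : u' j = w₀ j := hu'cls.2 j hij
            have h3 : u j < w j := lt_of_le_of_lt (h1.trans_eq h2) hlt
            have h4 : u' j ≤ u j := humult j h3 u' hu'cls.1
              (fun j' hj' => (hu'cls.2 j' (hij.trans hj')).trans (IH j' hj').symm)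
            exact le_antisymm (h2 ▸ h1) (h2 ▸ h4)
        · have h1 : u j ≤ w₀ j := heq ▸ hule' j
          rcases eq_or_lt_of_le h1 with h | h
          · exact h
          · obtain ⟨v₀, hv₀⟩ := hcls
            have hv₀cls := Finset.mem_filter.mp hv₀
            have h2 : v₀ j ≤ u j := humult j (heq ▸ h) v₀ hv₀cls.1
              (fun j' hj' => (hv₀cls.2 j' (hij.trans hj')).trans (IH j' hj').symm)
            have h3 : v₀ j = w₀ j := hv₀cls.2 j hij
            exact absurd (h3 ▸ h2) (not_le.mpr h)
    have keyj : ∀ j, i < j → u j = w₀ j := fun j hj => key n j (Nat.sub_le n _) hj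
    have hwi : w₀ i = w i := by
      rcases lt_or_eq_of_le (hle' i) with hlt | h
      · rcases hm i hlt with h | ⟨h, _⟩ <;> exact absurd h (lt_irrefl i)
      · exact h
    have hucls : u ∈ JanetClass U i w₀ := Finset.mem_filter.mpr ⟨huU, keyj⟩
    have hui : u i < w i :=
      lt_of_le_of_ne (hule' i) (fun h => hne u hucls (h.trans hwi.symm))
    obtain ⟨v, hv, hveq⟩ :=
      Finset.exists_mem_eq_sup (JanetClass U i w₀) hcls (fun v => v i)
    have hvcls := Finset.mem_filter.mp hv
    have h5 : v i ≤ u i := humult i hui v hvcls.1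
      (fun j hj => (hvcls.2 j hj).trans (keyj j hj).symm)
    rw [hveq] at hsup
    exact lt_irrefl (w i) ((hwi ▸ hsup).trans_le (h5.trans hui.le))
  · intro hnc
    rcases janet_greedy U hU w n 0 (by omega) with ⟨u, ⟨v, hvU, hv⟩, hu⟩ | h
    · have huv : v = u := funext fun j => hv j (Nat.zero_le _)
      subst huv
      exact ⟨v, hvU, Pi.le_def.mpr fun j => (hu j (Nat.zero_le _)).1,
        fun j hj => (hu j (Nat.zero_le _)).2 hj⟩
    · exact absurd h hnc
end

section
/- A finite set U of monomials is complete (i.e. cone(U) = cone_J(U)) if and only if for every u ∈ U and every variable x that is non-multiplicative for u with respect to U, the monomial u·x belongs to the Janet involutive cone cone_J(U). -/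
/-- The cone of `U`: all multiples of monomials of `U`. -/
def MonCone {n : ℕ} (U : Finset (Fin n → ℕ)) : Set (Fin n → ℕ) :=
  {w | ∃ u ∈ U, u ≤ w}

/-- Reverse-lexicographic comparison (largest index first). -/
def RevLexLt {n : ℕ} (u v : Fin n → ℕ) : Prop :=
  ∃ i, u i < v i ∧ ∀ j, i < j → u j = v j

lemma revLexLt_toLex {n : ℕ} {u v : Fin n → ℕ} (h : RevLexLt u v) :
    toLex (fun k : Fin n => u k.rev) < toLex (fun k : Fin n => v k.rev) := by
  obtain ⟨i, hlt, hgt⟩ := h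
  refine ⟨i.rev, ?_, ?_⟩
  · intro j hj
    have : i < j.rev := by
      rw [Fin.lt_iff_val_lt_val] at hj ⊢
      have h1 := i.rev.is_lt
      have h2 := j.is_lt
      simp only [Fin.val_rev] at *
      omega
    simpa using hgt j.rev this
  · simpa using hlt

/-- Key lemma: if `x_i` is non-multiplicative for `u` and `v` is a Janet divisor of
`u·x_i`, then `v` is reverse-lexicographically greater than `u`. -/
lemma janet_key {n : ℕ} {U : Finset (Fin n → ℕ)} {u v : Fin n → ℕ} {i : Fin n}
    (hu : u ∈ U) (hnm : ¬ JanetMult U u i)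
    (hv : JanetDiv U v (u + Pi.single i 1)) : RevLexLt u v := by
  obtain ⟨hvU, hle, hmul⟩ := hv
  set w : Fin n → ℕ := u + Pi.single i 1 with hw
  have hwj : ∀ j, j ≠ i → w j = u j := by
    intro j hj
    simp [hw, Pi.single_apply, hj]
  have hwi : w i = u i + 1 := by simp [hw]
  by_cases hcase : ∀ j, v j = w j
  ·
    -- quotient is trivial; but then u ∈ U agrees with v above i and v i = u i + 1 > u i
    exact ⟨i, by rw [hcase i, hwi]; omega, fun j hj => (hcase j ▸ (hwj j (by omega : j ≠ i))).symm⟩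
  · push_neg at hcase
    -- the set of indices where v differs from w
    set T : Finset (Fin n) := Finset.univ.filter (fun j => v j ≠ w j) with hT
    have hTne : T.Nonempty := by
      obtain ⟨j, hj⟩ := hcase
      exact ⟨j, by simp [hT, hj]⟩
    set m : Fin n := T.max' hTne with hm
    have hmT : v m ≠ w m := by
      have := T.max'_mem hTne
      simpa [hT] using this
    have hmlt : v m < w m := lt_of_le_of_ne (hle m) hmT
    have habove : ∀ j, m < j → v j = w j := by
      intro j hj
      by_contra hne
      exact absurd (T.le_max' j (by simp [hT, hne])) (not_le.mpr hj)
    have hmmul : JanetMult U v m := hmul m hmlt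
    rcases lt_trichotomy m i with hmi | hmi | hmi
    · -- m < i : then v agrees with w above m, in particular v i = u i + 1
      refine ⟨i, ?_, ?_⟩
      · rw [habove i hmi, hwi]; omega
      · intro j hj
        have : m < j := hmi.trans hj
        rw [habove j this, hwj j (by omega)]
    · -- m = i : impossible
      exfalso
      have hwm : w m = u m + 1 := by rw [hmi]; exact hwi
      have hvi : v m ≤ u m := by omega
      have hagree : ∀ j, m < j → u j = v j := by
        intro j hj
        rw [habove j hj, hwj j (by omega)]
      have hui : u m ≤ v m := hmmul u hu hagree
      have hvu : v m = u m := le_antisymm (hvi) hui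
      apply hnm
      intro z hz hzagree
      have hzm : z m ≤ v m :=
        hmmul z hz (fun j hj => (hzagree j (hmi ▸ hj)).trans (hagree j hj))
      rw [← hmi]
      omega
    · -- m > i : impossible
      exfalso
      have hvm : v m < u m := by rwa [hwj m (by omega)] at hmlt
      have hagree : ∀ j, m < j → u j = v j := by
        intro j hj
        rw [habove j hj, hwj j (by omega : j ≠ i)]
      exact absurd (hmmul u hu hagree) (not_le.mpr hvm)

/-- A finite set `U` of monomials is complete (`cone(U) = cone_J(U)`) if and only if for
every `u ∈ U` and every variable `x_i` non-multiplicative for `u` w.r.t. `U`, the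
monomial `u·x_i` lies in the Janet involutive cone of `U`. -/
theorem janet_complete_iff (n : ℕ) (U : Finset (Fin n → ℕ)) :
    MonCone U = JanetCone U ↔
      ∀ u ∈ U, ∀ i : Fin n, ¬ JanetMult U u i →
        (u + Pi.single i 1) ∈ JanetCone U := by
  constructor
  · intro h u hu i _
    rw [← h]
    exact ⟨u, hu, by intro j; simp only [Pi.add_apply, Pi.single_apply]; split <;> omega⟩
  · intro h
    classical
    apply Set.Subset.antisymm
    · -- MonCone ⊆ JanetCone
      rintro x ⟨u0, hu0, hle0⟩
      set S : Finset (Fin n → ℕ) := U.filter (fun z => z ≤ x) with hS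
      have hSne : S.Nonempty := ⟨u0, by simp [hS, hu0, hle0]⟩
      haveI : WellFoundedLT (Fin n) := inferInstance
      obtain ⟨u, huS, hmax⟩ := S.exists_max_image
        (fun z : Fin n → ℕ => (toLex (fun k : Fin n => z k.rev) : Lex (Fin n → ℕ))) hSne
      have huU : u ∈ U := (Finset.mem_filter.mp huS).1
      have hux : u ≤ x := by simpa [hS] using (Finset.mem_filter.mp huS).2
      refine ⟨u, huU, hux, ?_⟩
      intro i hi
      by_contra hnm
      obtain ⟨v, hv⟩ := h u huU i hnm
      have hvx : v ≤ x := by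
        intro j
        have h1 := hv.2.1 j
        rcases eq_or_ne j i with rfl | hne
        · simp only [Pi.add_apply, Pi.single_eq_same] at h1
          exact h1.trans hi
        · simp only [Pi.add_apply, Pi.single_apply, hne, if_false, add_zero] at h1
          exact h1.trans (hux j)
      have hvS : v ∈ S := Finset.mem_filter.mpr ⟨hv.1, hvx⟩
      exact absurd (hmax v hvS) (not_le.mpr (revLexLt_toLex (janet_key huU hnm hv)))
    · -- JanetCone ⊆ MonCone
      rintro x ⟨u, huU, hle, _⟩
      exact ⟨u, huU, hle⟩
end

section
/- For every finite set U of monomials in M(x_1,...,x_n), there exists a finite set J(U) such that: J(U) is complete for the Janet division, U ⊆ J(U), and cone(U) = cone(J(U)). -/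
/-- Janet's completion lemma: every finite set `U` of monomials is contained in a finite
complete set `J(U)` with the same cone. -/
theorem janet_completion_exists (n : ℕ) (U : Finset (Fin n → ℕ)) :
    ∃ V : Finset (Fin n → ℕ),
      U ⊆ V ∧ MonCone V = JanetCone V ∧ MonCone U = MonCone V := by
  classical
  set d : Fin n → ℕ := fun i => U.sup fun u => u i with hd
  set V : Finset (Fin n → ℕ) :=
    (Fintype.piFinset fun i => Finset.range (d i + 1)).filter (fun w => ∃ u ∈ U, u ≤ w) with hV
  have hmemV : ∀ w, w ∈ V ↔ (∀ i, w i ≤ d i) ∧ ∃ u ∈ U, u ≤ w := by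
    intro w
    simp [hV, Fintype.mem_piFinset, Nat.lt_succ_iff]
  have hle_d : ∀ u ∈ U, ∀ i, u i ≤ d i := fun u hu i => Finset.le_sup (f := fun u => u i) hu
  have hUV : U ⊆ V := by
    intro u hu
    exact (hmemV u).2 ⟨hle_d u hu, u, hu, le_rfl⟩
  refine ⟨V, hUV, ?_, ?_⟩
  · ext w
    constructor
    · rintro ⟨v, hvV, hvw⟩
      obtain ⟨-, u, hu, huv⟩ := (hmemV v).1 hvV
      set m : Fin n → ℕ := fun i => min (w i) (d i) with hm
      have hmV : m ∈ V := by
        refine (hmemV m).2 ⟨fun i => min_le_right _ _, u, hu, fun i => ?_⟩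
        exact le_min ((huv i).trans (hvw i)) (hle_d u hu i)
      refine ⟨m, hmV, fun i => min_le_left _ _, fun i hi => ?_⟩
      have hdi : m i = d i := by
        rcases min_cases (w i) (d i) with ⟨h1, h2⟩ | ⟨h1, h2⟩
        · exact absurd hi (by simp [hm, h1])
        · simp [hm, h1]
      intro v' hv' _
      have := ((hmemV v').1 hv').1 i
      omega
    · rintro ⟨u, huV, huw, -⟩
      exact ⟨u, huV, huw⟩
  · ext w
    constructor
    · rintro ⟨u, hu, huw⟩
      exact ⟨u, hUV hu, huw⟩
    · rintro ⟨v, hvV, hvw⟩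
      obtain ⟨-, u, hu, huv⟩ := (hmemV v).1 hvV
      exact ⟨u, hu, huv.trans hvw⟩
end

section
/- Let I be a continuous involutive division. A subset U of M(x_1,...,x_n) is locally I-involutive if and only if it is I-involutive. -/
/-- `U` is involutive for the division `d`: its cone coincides with its involutive cone. -/
def IsInvolutiveSet {n : ℕ} (d : Finset (Fin n → ℕ) → (Fin n → ℕ) → (Fin n → ℕ) → Prop)
    (U : Finset (Fin n → ℕ)) : Prop :=
  MonCone U = {w | ∃ u, d U u w}

/-- `U` is locally involutive for `d`: every non-multiplicative prolongation `u·x_i`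
of an element `u` of `U` admits an involutive divisor in `U`. -/
def IsLocallyInvolutiveSet {n : ℕ}
    (d : Finset (Fin n → ℕ) → (Fin n → ℕ) → (Fin n → ℕ) → Prop)
    (U : Finset (Fin n → ℕ)) : Prop :=
  ∀ u ∈ U, ∀ i : Fin n, ¬ d U u (u + Pi.single i 1) →
    ∃ v ∈ U, d U v (u + Pi.single i 1)

/-- The division `d` is continuous: in any finite chain `u_1, …, u_{k+1}` of elements of a
finite set `U` in which each `u_{j+1}` involutively divides a non-multiplicative
prolongation `u_j·x_{i_j}` of `u_j`, the monomials `u_j` are pairwise distinct. -/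
def IsContinuousDivision {n : ℕ}
    (d : Finset (Fin n → ℕ) → (Fin n → ℕ) → (Fin n → ℕ) → Prop) : Prop :=
  ∀ (U : Finset (Fin n → ℕ)) (k : ℕ) (u : Fin (k + 1) → Fin n → ℕ) (x : Fin k → Fin n),
    (∀ j, u j ∈ U) →
    (∀ j : Fin k, ¬ d U (u j.castSucc) (u j.castSucc + Pi.single (x j) 1)) →
    (∀ j : Fin k, d U (u j.succ) (u j.castSucc + Pi.single (x j) 1)) →
    Function.Injective u


lemma aux_full {n : ℕ} {d : Finset (Fin n → ℕ) → (Fin n → ℕ) → (Fin n → ℕ) → Prop}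
    (hd : IsInvolutiveDivision n d) {U : Finset (Fin n → ℕ)} {u : Fin n → ℕ}
    (hu : u ∈ U) :
    ∀ (N : ℕ) (v : Fin n → ℕ), (∑ j, v j) = N →
      (∀ i, 0 < v i → d U u (u + Pi.single i 1)) → d U u (u + v) := by
  intro N
  induction N with
  | zero =>
    intro v hv _
    have hv0 : v = 0 := by
      funext j
      exact Finset.sum_eq_zero_iff.mp hv j (Finset.mem_univ j)
    simpa [hv0] using hd.2.1 U u hu
  | succ N ih =>
    intro v hv hmul
    have hex : ∃ i, 0 < v i := by
      by_contra h
      push_neg at h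
      simp only [Nat.le_zero] at h
      rw [Finset.sum_eq_zero (fun j _ => h j)] at hv
      omega
    obtain ⟨i, hi⟩ := hex
    set v' : Fin n → ℕ := fun j => v j - (Pi.single i 1 : Fin n → ℕ) j with hv'def
    have hvv : v = v' + Pi.single i 1 := by
      funext j
      by_cases hji : j = i
      · subst hji
        simp only [hv'def, Pi.add_apply, Pi.single_eq_same]
        omega
      · simp [hv'def, Pi.single_eq_of_ne hji]
    have hsingle : (∑ j, (Pi.single i 1 : Fin n → ℕ) j) = 1 := by
      simp [Pi.single_apply]
    have hsum : (∑ j, v' j) = N := by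
      have h2 : (∑ j, v j) = (∑ j, v' j) + ∑ j, (Pi.single i 1 : Fin n → ℕ) j := by
        rw [← Finset.sum_add_distrib]
        conv_lhs => rw [hvv]
        rfl
      rw [hsingle] at h2
      omega
    have hmul' : ∀ j, 0 < v' j → d U u (u + Pi.single j 1) := by
      intro j hj
      apply hmul
      have : v' j ≤ v j := Nat.sub_le _ _
      omega
    have h1 := ih v' hsum hmul'
    have h2 := (hd.2.2.1 U u hu v' (Pi.single i 1)).mp ⟨h1, hmul i hi⟩
    rwa [hvv, ← add_assoc]

/-- For a continuous involutive division, a finite set of monomials is locally involutive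
if and only if it is involutive. -/
theorem locally_involutive_iff_involutive (n : ℕ)
    (d : Finset (Fin n → ℕ) → (Fin n → ℕ) → (Fin n → ℕ) → Prop)
    (hd : IsInvolutiveDivision n d) (hcont : IsContinuousDivision d)
    (U : Finset (Fin n → ℕ)) :
    IsLocallyInvolutiveSet d U ↔ IsInvolutiveSet d U := by
  obtain ⟨ax1, ax2, ax3, ax4, ax5, ax6⟩ := hd
  constructor
  · intro hloc
    ext w
    simp only [Set.mem_setOf_eq]
    constructor
    · rintro ⟨u₀, hu₀, hle₀⟩
      by_contra hno
      push_neg at hno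
      have key : ∀ s : {p : Fin n → ℕ // p ∈ U ∧ p ≤ w},
          ∃ (t : {p : Fin n → ℕ // p ∈ U ∧ p ≤ w}) (i : Fin n),
            ¬ d U s.1 (s.1 + Pi.single i 1) ∧ d U t.1 (s.1 + Pi.single i 1) := by
        rintro ⟨u, hu, hle⟩
        have hnd : ¬ d U u w := hno u
        have hxi : ∃ i, 0 < (w - u) i ∧ ¬ d U u (u + Pi.single i 1) := by
          by_contra h
          push_neg at h
          apply hnd
          have hall : ∀ i, 0 < (w - u) i → d U u (u + Pi.single i 1) := fun i hi => h i hi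
          have := aux_full ⟨ax1, ax2, ax3, ax4, ax5, ax6⟩ hu (∑ j, (w - u) j) (w - u) rfl hall
          have heq : u + (w - u) = w := by
            funext j
            have h0 : u j ≤ w j := hle j
            simp only [Pi.add_apply, Pi.sub_apply]
            omega
          rwa [heq] at this
        obtain ⟨i, hipos, hind⟩ := hxi
        have hle2 : u + Pi.single i 1 ≤ w := by
          intro j
          by_cases hji : j = i
          · subst hji
            have h1 := hle j
            have h2 : 0 < w j - u j := by simpa using hipos
            simp only [Pi.add_apply, Pi.single_eq_same]
            omega
          · simp only [Pi.add_apply, Pi.single_eq_of_ne hji, add_zero]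
            exact hle j
        obtain ⟨v, hvU, hvd⟩ := hloc u hu i hind
        have hvw : v ≤ w := le_trans (ax1 U v _ hvd).2 hle2
        exact ⟨⟨v, hvU, hvw⟩, i, hind, hvd⟩
      choose next idx h1 h2 using key
      set f : ℕ → {p : Fin n → ℕ // p ∈ U ∧ p ≤ w} :=
        fun m => next^[m] ⟨u₀, hu₀, hle₀⟩ with hf
      have hfsucc : ∀ m, f (m + 1) = next (f m) := fun m =>
        Function.iterate_succ_apply' next m _
      set k := U.card with hk
      have hinj : Function.Injective (fun j : Fin (k + 1) => (f (j : ℕ)).1) := by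
        apply hcont U k _ (fun j : Fin k => idx (f (j : ℕ)))
        · intro j
          exact (f (j : ℕ)).2.1
        · intro j
          have : ((j.castSucc : Fin (k+1)) : ℕ) = (j : ℕ) := rfl
          rw [this]
          exact h1 (f (j : ℕ))
        · intro j
          have hc : ((j.castSucc : Fin (k+1)) : ℕ) = (j : ℕ) := rfl
          have hs : ((j.succ : Fin (k+1)) : ℕ) = (j : ℕ) + 1 := rfl
          rw [hc, hs, hfsucc]
          exact h2 (f (j : ℕ))
      have hinj2 : Function.Injective
          (fun j : Fin (k + 1) => (⟨(f (j : ℕ)).1, (f (j : ℕ)).2.1⟩ : {x // x ∈ U})) := by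
        intro a b hab
        exact hinj (by simpa [Subtype.ext_iff] using hab)
      have hcard := Fintype.card_le_of_injective _ hinj2
      simp only [Fintype.card_fin, Fintype.card_coe] at hcard
      omega
    · rintro ⟨u, hu⟩
      exact ⟨u, (ax1 U u w hu).1, (ax1 U u w hu).2⟩
  · intro hinv u hu i _
    have hmem : u + Pi.single i 1 ∈ MonCone U :=
      ⟨u, hu, fun j => Nat.le_add_right _ _⟩
    rw [hinv] at hmem
    obtain ⟨v, hv⟩ := hmem
    exact ⟨v, (ax1 U v _ hv).1, hv⟩
end

section
/- The Thomas division is an involutive division, and moreover for any finite set U of monomials and any u ∈ U, the Thomas multiplicative variables of u are contained in the Janet multiplicative variables of u: Mult_T^U(u) ⊆ Mult_J^U(u). -/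
/-- The variable `x_i` is Thomas-multiplicative for `u` w.r.t. `U`:
`deg_i(u) = deg_i(U)`. -/
def ThomasMult {n : ℕ} (U : Finset (Fin n → ℕ)) (u : Fin n → ℕ) (i : Fin n) : Prop :=
  ∀ v ∈ U, v i ≤ u i

/-- The Thomas divisibility relation: `u ∈ U` divides `w` and all variables of the
quotient are Thomas-multiplicative for `u` w.r.t. `U`. -/
def ThomasDiv {n : ℕ} (U : Finset (Fin n → ℕ)) (u w : Fin n → ℕ) : Prop :=
  u ∈ U ∧ u ≤ w ∧ ∀ i, u i < w i → ThomasMult U u i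

/-- The Thomas division is an involutive division, and the Janet division refines it:
for a finite set of monomials `U` and `u ∈ U`, every Thomas-multiplicative variable of
`u` is Janet-multiplicative. -/
theorem thomas_division_involutive_and_refined_by_janet (n : ℕ) :
    IsInvolutiveDivision n (fun U u w => ThomasDiv U u w) ∧
    ∀ (U : Finset (Fin n → ℕ)) (u : Fin n → ℕ), u ∈ U →
      ∀ i : Fin n, ThomasMult U u i → JanetMult U u i := by
  constructor
  · refine ⟨?_, ?_, ?_, ?_, ?_, ?_⟩
    · rintro U u w ⟨h1, h2, _⟩; exact ⟨h1, h2⟩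
    · intro U u hu
      exact ⟨hu, le_refl u, fun i hi => absurd hi (lt_irrefl _)⟩
    · intro U u hu v w
      constructor
      · rintro ⟨⟨_, _, h1⟩, ⟨_, _, h2⟩⟩
        refine ⟨hu, fun i => by simp [Pi.add_apply]; omega, fun i hi => ?_⟩
        have hvw : 0 < v i + w i := by
          have := hi; simp [Pi.add_apply] at this; omega
        by_cases hv : 0 < v i
        · exact h1 i (by simp [Pi.add_apply]; omega)
        · have hw : 0 < w i := by omega
          exact h2 i (by simp [Pi.add_apply]; omega)
      · rintro ⟨_, _, h⟩
        constructor
        · refine ⟨hu, fun i => by simp [Pi.add_apply], fun i hi => ?_⟩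
          apply h i
          have : u i < u i + v i := by simpa using hi
          simp [Pi.add_apply]; omega
        · refine ⟨hu, fun i => by simp [Pi.add_apply], fun i hi => ?_⟩
          apply h i
          have : u i < u i + w i := by simpa using hi
          simp [Pi.add_apply]; omega
    · rintro U u u' w ⟨hu, huw, h1⟩ ⟨hu', hu'w, h2⟩
      right
      have hle : u' ≤ u := by
        intro i
        by_contra hlt
        push_neg at hlt
        have hm : ThomasMult U u i := h1 i (lt_of_lt_of_le hlt (hu'w i))
        exact absurd (hm u' hu') (not_le.mpr hlt)
      exact ⟨hu', hle, fun i hi => h2 i (lt_of_lt_of_le hi (huw i))⟩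
    · rintro U u u' w ⟨hu, huu', h1⟩ ⟨hu', hu'w, h2⟩
      refine ⟨hu, le_trans huu' hu'w, fun i hi => ?_⟩
      rcases lt_or_eq_of_le (huu' i) with h | h
      · exact h1 i h
      · intro v hv
        have hh := h2 i (h ▸ hi) v hv
        rw [← h] at hh
        exact hh
    · rintro U U' u w hsub hu ⟨_, huw, h⟩
      exact ⟨hu, huw, fun i hi v hv => h i hi v (hsub hv)⟩
  · intro U u _ i hT v hv _
    exact hT v hv
end

section
/- The Pommaret division is an involutive division and it is continuous, but it is not noetherian: there exists a finite set of monomials admitting no finite Pommaret completion. -/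
/-- Pommaret multiplicative variables (for the variable order `x_1 > x_2 > … > x_n`,
variables indexed so that `x_{i+1}` corresponds to `i : Fin n`): for
`u = x_1^{α_1}⋯x_k^{α_k}` with `α_k > 0`, the variables `x_j` with `j ≥ k` are
multiplicative; all variables are multiplicative for `u = 1`. This division does not
depend on the reference set of monomials. -/
def PommaretMult {n : ℕ} (u : Fin n → ℕ) (i : Fin n) : Prop :=
  ∀ l, i < l → u l = 0

/-- The Pommaret divisibility relation. -/
def PommaretDiv {n : ℕ} (U : Finset (Fin n → ℕ)) (u w : Fin n → ℕ) : Prop :=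
  u ∈ U ∧ u ≤ w ∧ ∀ i, u i < w i → PommaretMult u i

/-- A division is noetherian if every finite set of monomials admits a finite involutive
completion with the same cone. -/
def IsNoetherianDivision {n : ℕ}
    (d : Finset (Fin n → ℕ) → (Fin n → ℕ) → (Fin n → ℕ) → Prop) : Prop :=
  ∀ U : Finset (Fin n → ℕ), ∃ V : Finset (Fin n → ℕ),
    U ⊆ V ∧ MonCone U = MonCone V ∧ IsInvolutiveSet d V

/-! ### Auxiliary machinery -/

lemma add_single_apply {n : ℕ} (a : Fin n → ℕ) (e i : Fin n) :
    (a + (Pi.single e 1 : Fin n → ℕ)) i = a i + (if i = e then 1 else 0) := by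
  simp [Pi.single_apply]

def degM {n : ℕ} (u : Fin n → ℕ) : ℕ := ∑ i : Fin n, u i

def clsNat {n : ℕ} (u : Fin n → ℕ) : ℕ :=
  Finset.univ.sup fun i : Fin n => if u i = 0 then 0 else (i : ℕ) + 1

def valM {n : ℕ} (u : Fin n → ℕ) : ℕ :=
  ∑ i : Fin n, if (i : ℕ) + 1 = clsNat u then u i else 0

lemma le_clsNat {n : ℕ} (u : Fin n → ℕ) (i : Fin n) (h : u i ≠ 0) :
    (i : ℕ) + 1 ≤ clsNat u := by
  unfold clsNat
  have := Finset.le_sup (f := fun j : Fin n => if u j = 0 then 0 else (j : ℕ) + 1)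
    (Finset.mem_univ i)
  simpa only [if_neg h] using this

lemma clsNat_le {n : ℕ} (u : Fin n → ℕ) (m : ℕ)
    (h : ∀ i : Fin n, u i ≠ 0 → (i : ℕ) + 1 ≤ m) : clsNat u ≤ m := by
  apply Finset.sup_le
  intro i _
  by_cases h0 : u i = 0
  · simp [h0]
  · rw [if_neg h0]; exact h i h0

lemma eq_zero_of_clsNat_le {n : ℕ} (u : Fin n → ℕ) (i : Fin n)
    (h : clsNat u ≤ (i : ℕ)) : u i = 0 := by
  by_contra h0
  have := le_clsNat u i h0
  omega

lemma exists_cls {n : ℕ} (u : Fin n → ℕ) (h : clsNat u ≠ 0) :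
    ∃ i : Fin n, u i ≠ 0 ∧ (i : ℕ) + 1 = clsNat u := by
  unfold clsNat at h ⊢
  have hne : (Finset.univ : Finset (Fin n)).Nonempty := by
    rcases (Finset.univ : Finset (Fin n)).eq_empty_or_nonempty with he | hne
    · exfalso; apply h; rw [he]; simp
    · exact hne
  obtain ⟨i, -, hi⟩ := Finset.exists_mem_eq_sup (Finset.univ : Finset (Fin n)) hne
    (fun i : Fin n => if u i = 0 then 0 else (i : ℕ) + 1)
  by_cases h0 : u i = 0
  · rw [if_pos h0] at hi
    exact absurd hi h
  · exact ⟨i, h0, by rw [hi, if_neg h0]⟩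

lemma valM_eq {n : ℕ} (u : Fin n → ℕ) (i : Fin n) (h : (i : ℕ) + 1 = clsNat u) :
    valM u = u i := by
  rw [valM, Finset.sum_eq_single i]
  · rw [if_pos h]
  · intro j _ hj
    rw [if_neg]
    intro hj'
    exact hj (Fin.ext (by omega))
  · intro hi; exact absurd (Finset.mem_univ i) hi

def RelT (c1 v1 d1 c2 v2 d2 : ℕ) : Prop :=
  (c2 < c1 ∨ (c2 = c1 ∧ v2 < v1)) ∨ (c2 = c1 ∧ v2 = v1 ∧ d1 < d2)

lemma RelT_trans {c1 v1 d1 c2 v2 d2 c3 v3 d3 : ℕ}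
    (h1 : RelT c1 v1 d1 c2 v2 d2) (h2 : RelT c2 v2 d2 c3 v3 d3) :
    RelT c1 v1 d1 c3 v3 d3 := by
  unfold RelT at *; omega

lemma pommaret_step {n : ℕ} (u u' w : Fin n → ℕ) (x : Fin n)
    (hnm : ¬ PommaretMult u x)
    (hwap : ∀ i, w i = u i + (if i = x then 1 else 0))
    (hle : u' ≤ w)
    (hm : ∀ i, u' i < w i → PommaretMult u' i) :
    RelT (clsNat u) (valM u) (degM u) (clsNat u') (valM u') (degM u') := by
  unfold PommaretMult at hnm
  push_neg at hnm
  obtain ⟨l, hxl, hl⟩ := hnm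
  have hxl' : (x : ℕ) < (l : ℕ) := hxl
  have hxc : (x : ℕ) + 2 ≤ clsNat u := by
    have := le_clsNat u l hl; omega
  obtain ⟨c, hc0, hcq⟩ := exists_cls u (by omega)
  have hxcN : (x : ℕ) < (c : ℕ) := by omega
  have hcx : c ≠ x := by
    intro h; rw [h] at hxcN; omega
  by_cases hEq : u' = w
  · right
    have hap : ∀ i, u' i = u i + (if i = x then 1 else 0) := by
      intro i; rw [hEq]; exact hwap i
    have hcls : clsNat u' = clsNat u := by
      apply le_antisymm
      · apply clsNat_le
        intro i hi
        rw [hap i] at hi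
        by_cases h0 : u i = 0
        · have hix : i = x := by
            by_contra hix; rw [if_neg hix, h0] at hi; exact hi rfl
          subst hix; omega
        · exact le_clsNat u i h0
      · apply clsNat_le
        intro i hi
        apply le_clsNat
        rw [hap i]; omega
    refine ⟨hcls, ?_, ?_⟩
    · rw [valM_eq u c hcq, valM_eq u' c (by omega), hap c, if_neg hcx]
      omega
    · have hsum : degM u' = degM u + 1 := by
        unfold degM
        rw [show (∑ i : Fin n, u' i)
            = (∑ i : Fin n, u i) + (∑ i : Fin n, if i = x then 1 else 0) by
          rw [← Finset.sum_add_distrib]; exact Finset.sum_congr rfl fun i _ => hap i]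
        rw [Finset.sum_ite_eq' Finset.univ x (fun _ => 1), if_pos (Finset.mem_univ x)]
      omega
  · left
    have hex : ∃ i, u' i < w i := by
      by_contra hno
      push_neg at hno
      exact hEq (funext fun i => le_antisymm (hle i) (hno i))
    obtain ⟨i, hi⟩ := hex
    have hmi := hm i hi
    by_cases h0 : clsNat u' = 0
    · left; omega
    obtain ⟨c', hc'0, hc'q⟩ := exists_cls u' h0
    by_cases hu'c : u c' = 0
    · have h1 : u' c' ≤ u c' + (if c' = x then 1 else 0) := by
        rw [← hwap c']; exact hle c'
      have hc'x : c' = x := by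
        by_contra hne; rw [if_neg hne, hu'c] at h1; omega
      left
      have hcc : (c' : ℕ) = (x : ℕ) := by rw [hc'x]
      omega
    · have hle' : clsNat u' ≤ clsNat u := by
        rw [← hc'q]; exact le_clsNat u c' hu'c
      rcases lt_or_eq_of_le hle' with h | h
      · left; exact h
      · right
        refine ⟨h, ?_⟩
        have hcc : c' = c := Fin.ext (by omega)
        subst hcc
        have hic : ¬ ((c' : ℕ) < (i : ℕ)) := by
          intro hci
          have hui : u i = 0 := eq_zero_of_clsNat_le u i (by omega)
          have hix : i ≠ x := by
            intro hex'; rw [hex'] at hci; omega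
          rw [hwap i, hui, if_neg hix] at hi
          omega
        have hci : ¬ ((i : ℕ) < (c' : ℕ)) := by
          intro hlt
          exact hc'0 (hmi c' hlt)
        have hieq : i = c' := Fin.ext (by omega)
        subst hieq
        rw [hwap i, if_neg hcx] at hi
        rw [valM_eq u i hcq, valM_eq u' i hc'q]
        omega


/-- The Pommaret division is an involutive division and is continuous, but it is not
noetherian: there is a finite set of monomials admitting no finite Pommaret
completion. -/
theorem pommaret_involutive_continuous_not_noetherian :
    (∀ n : ℕ, IsInvolutiveDivision n (fun U u w => PommaretDiv U u w)) ∧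
    (∀ n : ℕ, IsContinuousDivision (n := n) (fun U u w => PommaretDiv U u w)) ∧
    (∃ (n : ℕ) (U : Finset (Fin n → ℕ)),
      ¬ ∃ V : Finset (Fin n → ℕ),
        U ⊆ V ∧ MonCone U = MonCone V ∧
          IsInvolutiveSet (fun U u w => PommaretDiv U u w) V) := by
  refine ⟨?_, ?_, ?_⟩
  · -- Involutive division axioms
    intro n
    refine ⟨?_, ?_, ?_, ?_, ?_, ?_⟩
    · exact fun U u w h => ⟨h.1, h.2.1⟩
    · exact fun U u hu => ⟨hu, le_refl u, fun i hi => absurd hi (lt_irrefl _)⟩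
    · intro U u hu v w
      constructor
      · rintro ⟨⟨_, h1le, h1m⟩, ⟨_, h2le, h2m⟩⟩
        refine ⟨hu, fun i => ?_, fun i hi => ?_⟩
        · simp only [Pi.add_apply]; omega
        · simp only [Pi.add_apply] at hi
          have hvw : 0 < v i ∨ 0 < w i := by omega
          rcases hvw with h | h
          · exact h1m i (by simp only [Pi.add_apply]; omega)
          · exact h2m i (by simp only [Pi.add_apply]; omega)
      · rintro ⟨_, hle, hmm⟩
        constructor
        · refine ⟨hu, fun i => by simp only [Pi.add_apply]; omega, fun i hi => ?_⟩
          exact hmm i (by simp only [Pi.add_apply] at hi ⊢; omega)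
        · refine ⟨hu, fun i => by simp only [Pi.add_apply]; omega, fun i hi => ?_⟩
          exact hmm i (by simp only [Pi.add_apply] at hi ⊢; omega)
    · intro U u u' w hd hd'
      obtain ⟨hu, huw, hmu⟩ := hd
      obtain ⟨hu', hu'w, hmu'⟩ := hd'
      by_cases h : u ≤ u'
      · left
        exact ⟨hu, h, fun i hi => hmu i (lt_of_lt_of_le hi (hu'w i))⟩
      · right
        rw [Pi.le_def] at h
        push_neg at h
        obtain ⟨i, hi⟩ := h
        have hmi : PommaretMult u' i := hmu' i (lt_of_lt_of_le hi (huw i))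
        have hle : u' ≤ u := by
          intro j
          by_contra hj
          push_neg at hj
          have hmj : PommaretMult u j := hmu j (lt_of_lt_of_le hj (hu'w j))
          rcases lt_trichotomy j i with h1 | h1 | h1
          · have := hmj i h1; omega
          · have hj' : u j < u' j := hj; subst h1; omega
          · have := hmi j h1; have hj' : u j < u' j := hj; omega
        exact ⟨hu', hle, fun j hj => hmu' j (lt_of_lt_of_le hj (huw j))⟩
    · intro U u u' w hd hd'
      obtain ⟨hu, huu', hmu⟩ := hd
      obtain ⟨hu', hu'w, hmu'⟩ := hd'
      refine ⟨hu, le_trans huu' hu'w, fun i hi => ?_⟩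
      by_cases hlt : u i < u' i
      · exact hmu i hlt
      · intro l hl
        have heq : u i = u' i := le_antisymm (huu' i) (not_lt.mp hlt)
        have h2 : u' i < w i := heq ▸ hi
        have h3 : u' l = 0 := hmu' i h2 l hl
        have h4 : u l ≤ u' l := huu' l
        omega
    · exact fun U U' u w hsub hu h => ⟨hu, h.2.1, h.2.2⟩
  · -- Continuity
    intro n U k u x hU hnd hd
    have hstep : ∀ j : Fin k,
        RelT (clsNat (u j.castSucc)) (valM (u j.castSucc)) (degM (u j.castSucc))
             (clsNat (u j.succ)) (valM (u j.succ)) (degM (u j.succ)) := by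
      intro j
      have hnm : ¬ PommaretMult (u j.castSucc) (x j) := by
        intro hmult
        apply hnd j
        refine ⟨hU _, fun i => by rw [add_single_apply]; exact Nat.le_add_right _ _, fun i hi => ?_⟩
        rw [add_single_apply] at hi
        have hieq : i = x j := by
          by_contra hne
          rw [if_neg hne] at hi
          omega
        rwa [hieq]
      obtain ⟨-, hle, hm⟩ := hd j
      exact pommaret_step (u j.castSucc) (u j.succ) _ (x j) hnm
        (fun i => add_single_apply _ _ i) hle hm
    have key : ∀ (b : ℕ) (hb : b < k + 1) (a : ℕ) (hab : a < b),
        RelT (clsNat (u ⟨a, by omega⟩)) (valM (u ⟨a, by omega⟩)) (degM (u ⟨a, by omega⟩))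
             (clsNat (u ⟨b, hb⟩)) (valM (u ⟨b, hb⟩)) (degM (u ⟨b, hb⟩)) := by
      intro b
      induction b with
      | zero => intro _ a ha; omega
      | succ b ih =>
        intro hb a ha
        have hbk : b < k := by omega
        have hstepb := hstep ⟨b, hbk⟩
        rw [Fin.castSucc_mk, Fin.succ_mk] at hstepb
        rcases Nat.lt_or_ge a b with h | h
        · exact RelT_trans (ih (by omega) a h) hstepb
        · have hab' : a = b := by omega
          subst hab'
          exact hstepb
    intro p q hpq
    by_contra hne
    rcases Ne.lt_or_gt hne with h | h
    · have hh := key q.val q.isLt p.val h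
      simp only [Fin.eta] at hh
      rw [hpq] at hh
      unfold RelT at hh
      omega
    · have hh := key p.val p.isLt q.val h
      simp only [Fin.eta] at hh
      rw [hpq] at hh
      unfold RelT at hh
      omega
  · -- Not noetherian: U = {x₁x₂} in two variables
    refine ⟨2, {fun _ => 1}, ?_⟩
    rintro ⟨V, hUV, hcone, hinv⟩
    have hv1 : ∀ v ∈ V, 1 ≤ v 0 ∧ 1 ≤ v 1 := by
      intro v hv
      have hvc : v ∈ MonCone V := ⟨v, hv, le_refl v⟩
      rw [← hcone] at hvc
      obtain ⟨t, ht, htv⟩ := hvc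
      have ht' : t = fun _ => 1 := Finset.mem_singleton.mp ht
      subst ht'
      exact ⟨htv 0, htv 1⟩
    have hw : (fun i : Fin 2 => if i = 0 then V.sup (fun t => t 0) + 1 else 1)
        ∈ MonCone V := by
      rw [← hcone]
      refine ⟨fun _ => 1, Finset.mem_singleton_self _, fun i => ?_⟩
      fin_cases i <;> simp
    rw [hinv] at hw
    obtain ⟨v, hvV, hv_le, hv_m⟩ := hw
    have h1 : 1 ≤ v 1 := (hv1 v hvV).2
    have h2 : v 0 ≤ V.sup (fun t => t 0) + 1 := by simpa using hv_le 0
    have hvle : v 0 ≤ V.sup (fun t => t 0) := Finset.le_sup (f := fun t => t 0) hvV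
    have hlt : v 0 < (fun i : Fin 2 => if i = 0 then V.sup (fun t => t 0) + 1 else 1) 0 := by
      simpa using Nat.lt_succ_of_le hvle
    have h3 : v 1 = 0 := hv_m 0 hlt 1 (by decide)
    rw [h3] at h1
    exact absurd h1 (by norm_num)
end
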